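/- If λ ≤ 1, then the supremum of the density ratio is attained at x = 1: sup_{x ≥ 0} b(x)/π_λ(x) = b(1)/π_λ(1). -/

import Mathlib

open scoped BigOperators

/-- Poisson probability mass function with parameter `l`. -/
noncomputable def poissonPMF (l : ℝ) (x : ℕ) : ℝ :=
  Real.exp (-l) * l ^ x / (Nat.factorial x)

/-- Poisson binomial probability mass function:
`b(x) = Σ_{J ⊆ ℕ, #J = x} ∏_{i ∈ J} p i · ∏_{k ∉ J} (1 - p k)`. -/
noncomputable def pb (p : ℕ → ℝ) (x : ℕ) : ℝ :=
  ∑' J : {J : Finset ℕ // J.card = x},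
    (∏ i ∈ (J : Finset ℕ), p i) * ∏' k : {k : ℕ // k ∉ (J : Finset ℕ)}, (1 - p k)

namespace PB18

/-- Elementary symmetric sum of `q` over subsets of `s` of size `x`. -/
noncomputable def es (q : ℕ → ℝ) (s : Finset ℕ) (x : ℕ) : ℝ :=
  ∑ J ∈ s.powersetCard x, ∏ i ∈ J, q i

lemma es_nonneg {q : ℕ → ℝ} (hq : ∀ i, 0 ≤ q i) (s : Finset ℕ) (x : ℕ) :
    0 ≤ es q s x :=
  Finset.sum_nonneg fun J _ => Finset.prod_nonneg fun i _ => hq i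

lemma es_zero (q : ℕ → ℝ) (s : Finset ℕ) : es q s 0 = 1 := by
  simp [es, Finset.powersetCard_zero]

lemma key_identity (q : ℕ → ℝ) (s : Finset ℕ) (r : ℕ) :
    ∑ i ∈ s, q i * es q (s.erase i) r = ((r : ℝ) + 1) * es q s (r + 1) := by
  have hrhs : ((r : ℝ) + 1) * es q s (r + 1)
      = ∑ J ∈ s.powersetCard (r + 1), ∑ i ∈ J, ∏ j ∈ J, q j := by
    rw [es, Finset.mul_sum]
    refine Finset.sum_congr rfl fun J hJ => ?_
    have hc : J.card = r + 1 := (Finset.mem_powersetCard.mp hJ).2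
    rw [Finset.sum_const, hc, nsmul_eq_mul]
    push_cast
    ring
  have hlhs : ∑ i ∈ s, q i * es q (s.erase i) r
      = ∑ i ∈ s, ∑ J ∈ (s.erase i).powersetCard r, q i * ∏ j ∈ J, q j := by
    refine Finset.sum_congr rfl fun i _ => ?_
    rw [es, Finset.mul_sum]
  rw [hrhs, hlhs, Finset.sum_sigma', Finset.sum_sigma']
  refine Finset.sum_nbij' (fun a => ⟨insert a.1 a.2, a.1⟩) (fun a => ⟨a.2, a.1.erase a.2⟩)
    ?_ ?_ ?_ ?_ ?_
  · rintro ⟨i, J⟩ h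
    simp only [Finset.mem_sigma, Finset.mem_powersetCard] at h ⊢
    obtain ⟨hi, hJ, hc⟩ := h
    have hiJ : i ∉ J := fun hmem => (Finset.notMem_erase i s) (hJ hmem)
    refine ⟨⟨?_, ?_⟩, Finset.mem_insert_self _ _⟩
    · exact Finset.insert_subset hi (hJ.trans (Finset.erase_subset _ _))
    · rw [Finset.card_insert_of_notMem hiJ, hc]
  · rintro ⟨J, i⟩ h
    simp only [Finset.mem_sigma, Finset.mem_powersetCard] at h ⊢
    obtain ⟨⟨hJ, hc⟩, hi⟩ := h
    refine ⟨hJ hi, Finset.erase_subset_erase i hJ, ?_⟩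
    rw [Finset.card_erase_of_mem hi, hc]
    omega
  · rintro ⟨i, J⟩ h
    simp only [Finset.mem_sigma, Finset.mem_powersetCard] at h
    obtain ⟨hi, hJ, hc⟩ := h
    have hiJ : i ∉ J := fun hmem => (Finset.notMem_erase i s) (hJ hmem)
    simp [Finset.erase_insert hiJ]
  · rintro ⟨J, i⟩ h
    simp only [Finset.mem_sigma, Finset.mem_powersetCard] at h
    simp [Finset.insert_erase h.2]
  · rintro ⟨i, J⟩ h
    simp only [Finset.mem_sigma, Finset.mem_powersetCard] at h
    obtain ⟨hi, hJ, hc⟩ := h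
    have hiJ : i ∉ J := fun hmem => (Finset.notMem_erase i s) (hJ hmem)
    simp [Finset.prod_insert hiJ]

lemma es_one (q : ℕ → ℝ) (s : Finset ℕ) : es q s 1 = ∑ i ∈ s, q i := by
  have h := key_identity q s 0
  simp [es_zero] at h
  linarith

lemma es_two (q : ℕ → ℝ) (s : Finset ℕ) :
    2 * es q s 2 = (∑ i ∈ s, q i) ^ 2 - ∑ i ∈ s, (q i) ^ 2 := by
  have h := key_identity q s 1
  have h2 : ∀ i ∈ s, q i * es q (s.erase i) 1 = q i * ((∑ j ∈ s, q j) - q i) := by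
    intro i hi
    rw [es_one, Finset.sum_erase_eq_sub hi]
  rw [Finset.sum_congr rfl h2] at h
  have h3 : ∑ i ∈ s, q i * ((∑ j ∈ s, q j) - q i)
      = (∑ i ∈ s, q i) ^ 2 - ∑ i ∈ s, (q i) ^ 2 := by
    simp only [mul_sub, Finset.sum_sub_distrib, ← Finset.sum_mul, sq]
  rw [h3] at h
  norm_num at h
  linarith

lemma cs_core (p q : ℕ → ℝ) (s : Finset ℕ)
    (hp0 : ∀ i, 0 ≤ p i) (hp1 : ∀ i, p i < 1) (hqdef : ∀ i, q i = p i / (1 - p i))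
    (hs : ∑ i ∈ s, p i ≤ 1) :
    (∑ i ∈ s, q i) ^ 2 - ∑ i ∈ s, (q i) ^ 2 ≤ (∑ i ∈ s, p i) * ∑ i ∈ s, q i := by
  have h1p : ∀ i, 0 < 1 - p i := fun i => by have := hp1 i; linarith
  have hq0 : ∀ i, 0 ≤ q i := fun i => by
    rw [hqdef i]; exact div_nonneg (hp0 i) (h1p i).le
  have hpq : ∀ i, q i * (1 - p i) = p i := fun i => by
    rw [hqdef i, div_mul_cancel₀]
    exact (h1p i).ne'
  have hqp : ∀ i, q i - p i = p i * q i := fun i => by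
    have := hpq i; nlinarith [hpq i]
  have hqpnn : ∀ i, 0 ≤ q i - p i := fun i => by
    have := hqp i; have := mul_nonneg (hp0 i) (hq0 i); linarith
  have hqpqnn : ∀ i, 0 ≤ (q i - p i) * q i := fun i =>
    mul_nonneg (hqpnn i) (hq0 i)
  have hq2 : ∀ i, (q i) ^ 2 = (q i - p i) + (q i - p i) * q i := fun i => by
    nlinarith [hpq i]
  set S := ∑ i ∈ s, q i with hS
  set lam := ∑ i ∈ s, p i with hlam
  set T := ∑ i ∈ s, (q i - p i) with hT
  set A := ∑ i ∈ s, (q i - p i) * q i with hA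
  have hTnn : 0 ≤ T := Finset.sum_nonneg fun i _ => hqpnn i
  have hAnn : 0 ≤ A := Finset.sum_nonneg fun i _ => hqpqnn i
  have hST : T = S - lam := by rw [hT, hS, hlam, Finset.sum_sub_distrib]
  have hsum2 : ∑ i ∈ s, (q i) ^ 2 = T + A := by
    rw [hT, hA, ← Finset.sum_add_distrib]
    exact Finset.sum_congr rfl fun i _ => hq2 i
  have hlamnn : 0 ≤ lam := Finset.sum_nonneg fun i _ => hp0 i
  have key : T * S ≤ T + A := by
    rcases le_or_gt S 1 with hS1 | hS1
    · have : T * S ≤ T := by nlinarith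
      linarith
    · have hcs := Finset.sum_mul_sq_le_sq_mul_sq s
        (fun i => Real.sqrt ((q i - p i) * q i)) (fun i => Real.sqrt (p i))
      have hfg : ∀ i ∈ s, Real.sqrt ((q i - p i) * q i) * Real.sqrt (p i) = q i - p i := by
        intro i _
        rw [← Real.sqrt_mul (hqpqnn i)]
        have : (q i - p i) * q i * p i = (q i - p i) ^ 2 := by
          rw [hqp i]; ring
        rw [this, Real.sqrt_sq (hqpnn i)]
      have hf2 : ∀ i ∈ s, Real.sqrt ((q i - p i) * q i) ^ 2 = (q i - p i) * q i := by
        intro i _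
        exact Real.sq_sqrt (hqpqnn i)
      have hg2 : ∀ i ∈ s, Real.sqrt (p i) ^ 2 = p i := fun i _ => Real.sq_sqrt (hp0 i)
      rw [Finset.sum_congr rfl hfg, Finset.sum_congr rfl hf2, Finset.sum_congr rfl hg2] at hcs
      have hT2A : T ^ 2 ≤ A := by nlinarith
      have hS1T : S - 1 ≤ T := by rw [hST]; linarith
      nlinarith
  nlinarith

variable {p q : ℕ → ℝ} {l : ℝ}

lemma step_ineq (hp0 : ∀ i, 0 ≤ p i) (hp1 : ∀ i, p i < 1)
    (hqdef : ∀ i, q i = p i / (1 - p i))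
    (hfin : ∀ s : Finset ℕ, ∑ i ∈ s, p i ≤ l) (hl1 : l ≤ 1) :
    ∀ (x : ℕ) (s : Finset ℕ), ((x : ℝ) + 2) * es q s (x + 2) ≤ l * es q s (x + 1) := by
  have h1p : ∀ i, 0 < 1 - p i := fun i => by have := hp1 i; linarith
  have hq0 : ∀ i, 0 ≤ q i := fun i => by
    rw [hqdef i]; exact div_nonneg (hp0 i) (h1p i).le
  intro x
  induction x with
  | zero =>
    intro s
    have hb := cs_core p q s hp0 hp1 hqdef ((hfin s).trans hl1)
    have h2 := es_two q s
    have hs1 := es_one q s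
    have hqs : 0 ≤ ∑ i ∈ s, q i := Finset.sum_nonneg fun i _ => hq0 i
    have hml : (∑ i ∈ s, p i) * (∑ i ∈ s, q i) ≤ l * (∑ i ∈ s, q i) :=
      mul_le_mul_of_nonneg_right (hfin s) hqs
    norm_num
    rw [hs1]
    linarith
  | succ x ih =>
    intro s
    have hk3 := key_identity q s (x + 2)
    have hk2 := key_identity q s (x + 1)
    have hle : ∑ i ∈ s, q i * (((x : ℝ) + 2) * es q (s.erase i) (x + 2))
        ≤ ∑ i ∈ s, q i * (l * es q (s.erase i) (x + 1)) :=
      Finset.sum_le_sum fun i _ => mul_le_mul_of_nonneg_left (ih (s.erase i)) (hq0 i)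
    have hLHS : ∑ i ∈ s, q i * (((x : ℝ) + 2) * es q (s.erase i) (x + 2))
        = ((x : ℝ) + 2) * ∑ i ∈ s, q i * es q (s.erase i) (x + 2) := by
      rw [Finset.mul_sum]; exact Finset.sum_congr rfl fun i _ => by ring
    have hRHS : ∑ i ∈ s, q i * (l * es q (s.erase i) (x + 1))
        = l * ∑ i ∈ s, q i * es q (s.erase i) (x + 1) := by
      rw [Finset.mul_sum]; exact Finset.sum_congr rfl fun i _ => by ring
    rw [hLHS, hRHS, hk3, hk2] at hle
    push_cast at hle ⊢
    have hx2 : (0 : ℝ) < (x : ℝ) + 2 := by positivity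
    have h := le_of_mul_le_mul_left
      (by nlinarith :
        ((x : ℝ) + 2) * (((x : ℝ) + 1 + 2) * es q s (x + 1 + 2))
          ≤ ((x : ℝ) + 2) * (l * es q s (x + 1 + 1))) hx2
    convert h using 2

lemma fact_chain (hp0 : ∀ i, 0 ≤ p i) (hp1 : ∀ i, p i < 1)
    (hqdef : ∀ i, q i = p i / (1 - p i))
    (hfin : ∀ s : Finset ℕ, ∑ i ∈ s, p i ≤ l) (hl0 : 0 ≤ l) (hl1 : l ≤ 1) :
    ∀ (x : ℕ) (s : Finset ℕ),
      ((Nat.factorial (x + 1) : ℝ)) * es q s (x + 1) ≤ l ^ x * es q s 1 := by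
  intro x
  induction x with
  | zero => intro s; simp
  | succ x ih =>
    intro s
    have hstep := step_ineq hp0 hp1 hqdef hfin hl1 x s
    have hfact : ((Nat.factorial (x + 2) : ℝ)) = ((x : ℝ) + 2) * (Nat.factorial (x + 1) : ℝ) := by
      rw [Nat.factorial_succ]; push_cast; ring
    have hfpos : (0 : ℝ) < (Nat.factorial (x + 1) : ℝ) := by positivity
    calc ((Nat.factorial (x + 2) : ℝ)) * es q s (x + 2)
        = (Nat.factorial (x + 1) : ℝ) * (((x : ℝ) + 2) * es q s (x + 2)) := by
          rw [hfact]; ring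
      _ ≤ (Nat.factorial (x + 1) : ℝ) * (l * es q s (x + 1)) :=
          mul_le_mul_of_nonneg_left hstep hfpos.le
      _ = l * ((Nat.factorial (x + 1) : ℝ) * es q s (x + 1)) := by ring
      _ ≤ l * (l ^ x * es q s 1) := mul_le_mul_of_nonneg_left (ih s) hl0
      _ = l ^ (x + 1) * es q s 1 := by ring

/-- The "normalized" Poisson binomial weights. -/
noncomputable def E (q : ℕ → ℝ) (x : ℕ) : ℝ :=
  ∑' J : {J : Finset ℕ // J.card = x}, ∏ i ∈ (J : Finset ℕ), q i

lemma E_zero (q : ℕ → ℝ) : E q 0 = 1 := by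
  rw [E, tsum_eq_single (⟨∅, Finset.card_empty⟩ : {J : Finset ℕ // J.card = 0})]
  · simp
  · intro J hJ
    exact absurd (Subtype.ext (Finset.card_eq_zero.mp J.2)) hJ

lemma E_one (q : ℕ → ℝ) : E q 1 = ∑' i, q i := by
  have hne : ∀ J : {J : Finset ℕ // J.card = 1}, (J : Finset ℕ).Nonempty := fun J =>
    Finset.card_pos.mp (by rw [J.2]; norm_num)
  let e : ℕ ≃ {J : Finset ℕ // J.card = 1} :=
    { toFun := fun i => ⟨{i}, Finset.card_singleton i⟩
      invFun := fun J => (J : Finset ℕ).min' (hne J)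
      left_inv := fun i => by simp
      right_inv := fun J => by
        obtain ⟨a, ha⟩ := Finset.card_eq_one.mp J.2
        apply Subtype.ext
        simp [ha] }
  rw [E, ← e.tsum_eq (fun J : {J : Finset ℕ // J.card = 1} => ∏ i ∈ (J : Finset ℕ), q i)]
  apply tsum_congr
  intro i
  simp [e]

lemma E_nonneg (hq0 : ∀ i, 0 ≤ q i) (x : ℕ) : 0 ≤ E q x :=
  tsum_nonneg fun J => Finset.prod_nonneg fun i _ => hq0 i

lemma E_summable_fact (hp0 : ∀ i, 0 ≤ p i) (hp1 : ∀ i, p i < 1)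
    (hqdef : ∀ i, q i = p i / (1 - p i)) (hq0 : ∀ i, 0 ≤ q i) (hq_sum : Summable q)
    (hfin : ∀ s : Finset ℕ, ∑ i ∈ s, p i ≤ l) (hl0 : 0 ≤ l) (hl1 : l ≤ 1) (y : ℕ) :
    Summable (fun J : {J : Finset ℕ // J.card = y + 1} => ∏ i ∈ (J : Finset ℕ), q i) ∧
      ((Nat.factorial (y + 1) : ℝ)) * E q (y + 1) ≤ l ^ y * ∑' i, q i := by
  have hfpos : (0 : ℝ) < (Nat.factorial (y + 1) : ℝ) := by positivity
  set c : ℝ := l ^ y * (∑' i, q i) / (Nat.factorial (y + 1) : ℝ) with hc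
  have hbound : ∀ u : Finset {J : Finset ℕ // J.card = y + 1},
      ∑ J ∈ u, ∏ i ∈ (J : Finset ℕ), q i ≤ c := by
    intro u
    set S : Finset ℕ := u.sup fun J => (J : Finset ℕ) with hSdef
    have hsub : u.image Subtype.val ⊆ S.powersetCard (y + 1) := by
      intro A hA
      obtain ⟨J, hJ, rfl⟩ := Finset.mem_image.mp hA
      exact Finset.mem_powersetCard.mpr ⟨Finset.le_sup hJ, J.2⟩
    have h1 : ∑ J ∈ u, ∏ i ∈ (J : Finset ℕ), q i ≤ es q S (y + 1) := by
      calc ∑ J ∈ u, ∏ i ∈ (J : Finset ℕ), q i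
          = ∑ A ∈ u.image Subtype.val, ∏ i ∈ A, q i :=
            (Finset.sum_image (f := fun A => ∏ i ∈ A, q i) (g := Subtype.val)
              (fun a _ b _ h => Subtype.ext h)).symm
        _ ≤ es q S (y + 1) :=
            Finset.sum_le_sum_of_subset_of_nonneg hsub
              (fun A _ _ => Finset.prod_nonneg fun i _ => hq0 i)
    have h2 := fact_chain hp0 hp1 hqdef hfin hl0 hl1 y S
    have h3 : es q S 1 ≤ ∑' i, q i := by
      rw [es_one]
      exact Summable.sum_le_tsum S (fun i _ => hq0 i) hq_sum
    rw [hc, le_div_iff₀ hfpos]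
    nlinarith [pow_nonneg hl0 y]
  have hnn : (0 : {J : Finset ℕ // J.card = y + 1} → ℝ) ≤
      fun J : {J : Finset ℕ // J.card = y + 1} => ∏ i ∈ (J : Finset ℕ), q i :=
    fun J => Finset.prod_nonneg fun i _ => hq0 i
  have hsF := summable_of_sum_le hnn hbound
  refine ⟨hsF, ?_⟩
  have hE := Summable.tsum_le_of_sum_le hsF hbound
  rw [E]
  rw [hc, le_div_iff₀ hfpos] at hE
  linarith

lemma pb_factor (hp1 : ∀ i, p i < 1)
    (hqdef : ∀ i, q i = p i / (1 - p i))
    (hlogs : Summable fun k => Real.log (1 - p k)) (x : ℕ) :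
    pb p x = (∏' k, (1 - p k)) * E q x := by
  have h1p : ∀ i, 0 < 1 - p i := fun i => by have := hp1 i; linarith
  rw [pb, E, ← tsum_mul_left]
  apply tsum_congr
  intro J
  have h1 : Multipliable ((fun k => 1 - p k) ∘ ((↑) : ((J : Finset ℕ) : Set ℕ) → ℕ)) :=
    ⟨_, hasProd_fintype _⟩
  have h2 : Multipliable ((fun k => 1 - p k) ∘ ((↑) : ↑(((J : Finset ℕ) : Set ℕ))ᶜ → ℕ)) :=
    Real.multipliable_of_summable_log (fun n => h1p n) (hlogs.subtype _)
  have hsplit := Multipliable.tprod_mul_tprod_compl (f := fun k => 1 - p k) h1 h2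
  have hfin : (∏' x : ((J : Finset ℕ) : Set ℕ), (1 - p x)) = ∏ i ∈ (J : Finset ℕ), (1 - p i) :=
    Finset.tprod_subtype' (J : Finset ℕ) (fun k => 1 - p k)
  have hcompl : (∏' x : ↑(((J : Finset ℕ) : Set ℕ))ᶜ, (1 - p (x : ℕ)))
      = ∏' k : {k : ℕ // k ∉ (J : Finset ℕ)}, (1 - p (k : ℕ)) :=
    (Equiv.subtypeEquivRight (fun x => by simp)).tprod_eq
      (fun k : {k : ℕ // k ∉ (J : Finset ℕ)} => 1 - p (k : ℕ))
  rw [hfin, hcompl] at hsplit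
  have hprodpos : 0 < ∏ i ∈ (J : Finset ℕ), (1 - p i) :=
    Finset.prod_pos fun i _ => h1p i
  have htp : (∏' k : {k : ℕ // k ∉ (J : Finset ℕ)}, (1 - p (k : ℕ)))
      = (∏' k, (1 - p k)) / ∏ i ∈ (J : Finset ℕ), (1 - p i) := by
    rw [eq_div_iff hprodpos.ne', mul_comm]
    exact hsplit
  have hq' : ∏ i ∈ (J : Finset ℕ), q i
      = (∏ i ∈ (J : Finset ℕ), p i) / ∏ i ∈ (J : Finset ℕ), (1 - p i) := by
    rw [← Finset.prod_div_distrib]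
    exact Finset.prod_congr rfl fun i _ => hqdef i
  rw [htp, hq']
  ring

end PB18

/-- If `λ ≤ 1`, then the supremum of the density ratio is attained at `x = 1`:
`sup_x b(x)/π_λ(x) = b(1)/π_λ(1)`. -/
theorem stmt_18 (p : ℕ → ℝ) (hp : ∀ i, p i ∈ Set.Ico (0 : ℝ) 1) (hsum : Summable p)
    (l : ℝ) (hl : l = ∑' i, p i) (hlpos : 0 < l) (hl1 : l ≤ 1) :
    (⨆ x : ℕ, pb p x / poissonPMF l x) = pb p 1 / poissonPMF l 1 := by
  classical
  have hp0 : ∀ i, 0 ≤ p i := fun i => (hp i).1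
  have hp1 : ∀ i, p i < 1 := fun i => (hp i).2
  have h1p : ∀ i, 0 < 1 - p i := fun i => by have := hp1 i; linarith
  set q : ℕ → ℝ := fun i => p i / (1 - p i) with hqset
  have hqdef : ∀ i, q i = p i / (1 - p i) := fun i => rfl
  have hq0 : ∀ i, 0 ≤ q i := fun i => div_nonneg (hp0 i) (h1p i).le
  have hple : ∀ i, p i ≤ q i := fun i => by
    rw [hqdef i, le_div_iff₀ (h1p i)]
    nlinarith [hp0 i]
  have hq_sum : Summable q := by
    obtain ⟨N, hN⟩ := Filter.eventually_atTop.mp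
      (hsum.tendsto_atTop_zero.eventually (gt_mem_nhds one_half_pos))
    have hqle : ∀ n, q (n + N) ≤ 2 * p (n + N) := by
      intro n
      have hp2 : p (n + N) < 1 / 2 := hN (n + N) (Nat.le_add_left N n)
      rw [hqdef, div_le_iff₀ (h1p _)]
      nlinarith [hp0 (n + N)]
    have h2 : Summable fun n => q (n + N) :=
      Summable.of_nonneg_of_le (fun n => hq0 _) hqle
        (((summable_nat_add_iff N).2 hsum).mul_left 2)
    exact (summable_nat_add_iff N).1 h2
  have hfin : ∀ s : Finset ℕ, ∑ i ∈ s, p i ≤ l := fun s => by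
    rw [hl]; exact Summable.sum_le_tsum s (fun i _ => hp0 i) hsum
  have hl0 : (0 : ℝ) ≤ l := hlpos.le
  have hlogs : Summable fun k => Real.log (1 - p k) := by
    have hneg : Summable fun k => -Real.log (1 - p k) := by
      apply Summable.of_nonneg_of_le _ _ hq_sum
      · intro k
        have h := Real.log_le_sub_one_of_pos (h1p k)
        have hpk := hp0 k
        linarith
      · intro k
        have h := Real.one_sub_inv_le_log_of_pos (h1p k)
        have hqi : (1 - p k)⁻¹ - 1 = q k := by
          have hne := (h1p k).ne'
          rw [hqdef]
          field_simp
          ring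
        linarith
    simpa using hneg.neg
  have hm : Multipliable fun k => 1 - p k :=
    Real.multipliable_of_summable_log h1p hlogs
  have hPnn : (0 : ℝ) ≤ ∏' k, (1 - p k) :=
    ge_of_tendsto' hm.hasProd (fun s => Finset.prod_nonneg fun i _ => (h1p i).le)
  have hfact := PB18.pb_factor hp1 hqdef hlogs
  have hπ : ∀ x : ℕ, 0 < poissonPMF l x := fun x => by
    rw [poissonPMF]
    have h1 : (0 : ℝ) < (Nat.factorial x : ℝ) := by positivity
    exact div_pos (mul_pos (Real.exp_pos _) (pow_pos hlpos x)) h1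
  have hE1 : l ≤ PB18.E q 1 := by
    rw [PB18.E_one, hl]
    exact Summable.tsum_le_tsum hple hsum hq_sum
  have hkey : ∀ x : ℕ, PB18.E q x * poissonPMF l 1 ≤ PB18.E q 1 * poissonPMF l x := by
    intro x
    cases x with
    | zero =>
      rw [PB18.E_zero, poissonPMF, poissonPMF]
      have hexp := Real.exp_pos (-l)
      simp [Nat.factorial]
      nlinarith [hexp, hE1]
    | succ y =>
      obtain ⟨hsF, hfc⟩ := PB18.E_summable_fact hp0 hp1 hqdef hq0 hq_sum hfin hl0 hl1 y
      rw [← PB18.E_one q] at hfc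
      rw [poissonPMF, poissonPMF]
      have hfpos : (0 : ℝ) < (Nat.factorial (y + 1) : ℝ) := by positivity
      have hfpos1 : (0 : ℝ) < (Nat.factorial 1 : ℝ) := by positivity
      have hexp := Real.exp_pos (-l)
      have h2 : PB18.E q (y + 1) * l * (Nat.factorial (y + 1) : ℝ)
          ≤ PB18.E q 1 * l ^ (y + 1) := by
        calc PB18.E q (y + 1) * l * (Nat.factorial (y + 1) : ℝ)
            = (Nat.factorial (y + 1) : ℝ) * PB18.E q (y + 1) * l := by ring
          _ ≤ l ^ y * PB18.E q 1 * l := mul_le_mul_of_nonneg_right hfc hl0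
          _ = PB18.E q 1 * l ^ (y + 1) := by ring
      have key2 : PB18.E q (y + 1) * l * Real.exp (-l)
          ≤ PB18.E q 1 * l ^ (y + 1) * Real.exp (-l) / (Nat.factorial (y + 1) : ℝ) := by
        rw [le_div_iff₀ hfpos]
        nlinarith [mul_le_mul_of_nonneg_right h2 hexp.le]
      calc PB18.E q (y + 1) * (Real.exp (-l) * l ^ 1 / (Nat.factorial 1 : ℝ))
          = PB18.E q (y + 1) * l * Real.exp (-l) := by
            simp only [Nat.factorial_one, Nat.cast_one, pow_one, div_one]; ring
        _ ≤ PB18.E q 1 * l ^ (y + 1) * Real.exp (-l) / (Nat.factorial (y + 1) : ℝ) := key2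
        _ = PB18.E q 1 * (Real.exp (-l) * l ^ (y + 1) / (Nat.factorial (y + 1) : ℝ)) := by
            ring
  have hratio : ∀ x : ℕ, pb p x / poissonPMF l x ≤ pb p 1 / poissonPMF l 1 := by
    intro x
    rw [div_le_div_iff₀ (hπ x) (hπ 1)]
    calc pb p x * poissonPMF l 1
        = (∏' k, (1 - p k)) * (PB18.E q x * poissonPMF l 1) := by rw [hfact x]; ring
      _ ≤ (∏' k, (1 - p k)) * (PB18.E q 1 * poissonPMF l x) :=
          mul_le_mul_of_nonneg_left (hkey x) hPnn
      _ = pb p 1 * poissonPMF l x := by rw [hfact 1]; ring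
  have hbdd : BddAbove (Set.range fun x : ℕ => pb p x / poissonPMF l x) :=
    ⟨pb p 1 / poissonPMF l 1, by rintro y ⟨x, rfl⟩; exact hratio x⟩
  exact le_antisymm (ciSup_le hratio) (le_ciSup hbdd 1)
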